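/- Let q be a prime power, ℓ > 1, n = (q^ℓ - 1)/(q - 1), and M ≥ 1. Let a_0, ..., a_M ∈ 𝔽_q and let F = Σ_{i=0}^{M} a_i X_i^n in the multivariate polynomial ring 𝔽_q[X_0, ..., X_M]. Then Σ_{i=0}^{M} (∂F/∂X_i) · X_i^{q^ℓ} = n · F^q as polynomials. In particular, F divides Σ_{i=0}^{M} (∂F/∂X_i) · X_i^{q^ℓ}, i.e., the Fermat hypersurface F = 0 is 𝔽_{q^ℓ}-Frobenius nonclassical. -/
import Mathlib

open MvPolynomial

theorem stmt_0 (q : ℕ) (hq : IsPrimePow q)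
    (K : Type*) [Field K] [Fintype K] (hK : Fintype.card K = q)
    (ℓ : ℕ) (hℓ : 1 < ℓ) (n : ℕ) (hn : n = (q ^ ℓ - 1) / (q - 1))
    (M : ℕ) (hM : 1 ≤ M) (a : Fin (M + 1) → K)
    (F : MvPolynomial (Fin (M + 1)) K)
    (hF : F = ∑ i, C (a i) * X i ^ n) :
    (∑ i, (pderiv i F) * X i ^ (q ^ ℓ)) = (n : MvPolynomial (Fin (M + 1)) K) * F ^ q ∧
    F ∣ ∑ i, (pderiv i F) * X i ^ (q ^ ℓ) := by
  obtain ⟨p, k, hp, hk, rfl⟩ := hq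
  have hp' : p.Prime := hp.nat_prime
  have hq2 : 2 ≤ p ^ k := Nat.one_lt_pow hk.ne' hp'.two_le
  -- characteristic
  obtain ⟨m, hrp, hcard⟩ := FiniteField.card K (ringChar K)
  have hr : (ringChar K).Prime := hrp
  have hpr : p = ringChar K := by
    have : p ∣ ringChar K ^ (m : ℕ) := by
      rw [← hcard, hK]; exact dvd_pow_self p hk.ne'
    exact (Nat.prime_dvd_prime_iff_eq hp' hr).mp (hp'.dvd_of_dvd_pow this)
  have hchar : CharP K p := hpr ▸ ringChar.charP K
  have hfact : Fact p.Prime := ⟨hp'⟩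
  have hcharM : CharP (MvPolynomial (Fin (M + 1)) K) p := by infer_instance
  -- arithmetic
  have hdvd : (p ^ k - 1) ∣ (p ^ k) ^ ℓ - 1 := by
    simpa using Nat.sub_dvd_pow_sub_pow (p ^ k) 1 ℓ
  have hnmul : n * (p ^ k - 1) = (p ^ k) ^ ℓ - 1 := by
    rw [hn]; exact Nat.div_mul_cancel hdvd
  have hle : (p ^ k) ≤ (p ^ k) ^ ℓ := Nat.le_self_pow (by omega) _
  have hn1 : 1 ≤ n := by
    rcases Nat.eq_zero_or_pos n with h | h
    · exfalso; rw [h] at hnmul; omega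
    · exact h
  have hexp : n - 1 + (p ^ k) ^ ℓ = n * p ^ k := by
    have h2 : n * (p ^ k - 1) + n = n * p ^ k := by
      calc n * (p ^ k - 1) + n = n * ((p ^ k - 1) + 1) := by ring
        _ = n * p ^ k := by rw [Nat.sub_add_cancel (by omega)]
    omega
  -- pderiv
  have hpd : ∀ i, pderiv i F = C (a i) * ((n : MvPolynomial (Fin (M+1)) K) * X i ^ (n - 1)) := by
    intro i
    rw [hF, map_sum, Finset.sum_eq_single i]
    · simp [pderiv_C_mul, pderiv_pow]
    · intro j _ hj
      simp [pderiv_C_mul, pderiv_pow, pderiv_X_of_ne hj]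
    · simp
  have haq : ∀ i, a i ^ p ^ k = a i := by
    intro i; rw [← hK]; exact FiniteField.pow_card (a i)
  have hFq : F ^ p ^ k = ∑ i, C (a i) * X i ^ (n * p ^ k) := by
    rw [hF, sum_pow_char_pow]
    refine Finset.sum_congr rfl fun i _ => ?_
    rw [mul_pow, ← pow_mul, ← map_pow, haq]
  have key : (∑ i, (pderiv i F) * X i ^ ((p ^ k) ^ ℓ)) =
      (n : MvPolynomial (Fin (M + 1)) K) * F ^ p ^ k := by
    rw [hFq, Finset.mul_sum]
    refine Finset.sum_congr rfl fun i _ => ?_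
    rw [hpd i, ← hexp, pow_add]
    ring
  refine ⟨key, key ▸ Dvd.dvd.mul_left (dvd_pow_self F (by positivity)) _⟩
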